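/- Let D be a nonnegative-integer random variable with probability mass function (p_l), r ≥ 1, x ∈ (0,1], and q_j(p) := P(D_p ≥ j) for the p-thinning. Assuming E[A^D] < ∞ for all A > 1, the identity 2∑_{j=r}^∞ C(j−1,r−1) ∫_x^1 (p−x)^{j−r} p^{−j−2} q_j'(p) dp = r·(x^{−2} − 1)·∑_{l=r}^∞ p_l·C(l,r)·(1−x)^{l−r} holds. -/

import Mathlib

open Real MeasureTheory intervalIntegral

noncomputable def binomProb (l r : ℕ) (p : ℝ) : ℝ :=
  (l.choose r : ℝ) * p ^ r * (1 - p) ^ (l - r)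

/-- `q_j'(p) = ∑_l p_l l β_{l-1,j-1}(p)`. -/
noncomputable def thinTailDeriv (w : ℕ → ℝ) (j : ℕ) (p : ℝ) : ℝ :=
  ∑' l : ℕ, w l * l * binomProb (l - 1) (j - 1) p

private lemma chooseLeTwoPow (n k : ℕ) : n.choose k ≤ 2 ^ n := by
  rcases le_or_gt k n with h | h
  · calc n.choose k ≤ ∑ m ∈ Finset.range (n+1), n.choose m :=
        Finset.single_le_sum (fun _ _ => Nat.zero_le _) (Finset.mem_range.mpr (by omega))
      _ = 2 ^ n := Nat.sum_range_choose n
  · rw [Nat.choose_eq_zero_of_lt h]; exact Nat.zero_le _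

private lemma intP3 (x : ℝ) (hx0 : 0 < x) (hx1 : x ≤ 1) :
    ∫ p in x..1, 1 / p ^ 3 = (1 / x ^ 2 - 1) / 2 := by
  have h0 : (0:ℝ) ∉ Set.uIcc x 1 := by
    rw [Set.uIcc_of_le hx1]; intro h; exact absurd h.1 (by linarith)
  have hz := integral_zpow (a := x) (b := (1:ℝ)) (n := -3) (Or.inr ⟨by norm_num, h0⟩)
  rw [show ∫ p in x..1, 1/p^3 = ∫ p in x..1, p ^ (-3:ℤ) by
    apply intervalIntegral.integral_congr; intro p hp
    show 1/p^3 = p ^ (-3:ℤ)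
    rw [zpow_neg, one_div]
    norm_cast]
  rw [hz]
  norm_num [zpow_neg]
  have hx := hx0.ne'
  field_simp
  ring

private lemma pointwiseSum (W : ℝ) (r m : ℕ) (hr : 1 ≤ r) (x p : ℝ) (hp : p ≠ 0) :
    ∑ i ∈ Finset.range (m+1), ((r+i-1).choose (r-1):ℝ) *
      ((p-x)^i * (W * binomProb (r+m-1) (r+i-1) p) / p^(r+i+2))
    = W * ((r+m-1).choose (r-1):ℝ) * (1-x)^m * (1/p^3) := by
  have key : ∀ i ∈ Finset.range (m+1), ((r+i-1).choose (r-1):ℝ) *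
      ((p-x)^i * (W * binomProb (r+m-1) (r+i-1) p) / p^(r+i+2))
      = W * ((r+m-1).choose (r-1):ℝ) * (1/p^3) * ((p-x)^i * (1-p)^(m-i) * (m.choose i : ℝ)) := by
    intro i hi
    have him : i ≤ m := by simpa using Nat.lt_succ_iff.mp (Finset.mem_range.mp hi)
    have hch : (r+m-1).choose (r+i-1) * (r+i-1).choose (r-1)
        = (r+m-1).choose (r-1) * m.choose i := by
      have h := Nat.choose_mul (n := r+m-1) (k := r+i-1) (s := r-1)
        (by omega)
      have h1 : r+m-1-(r-1) = m := by omega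
      have h2 : r+i-1-(r-1) = i := by omega
      rw [h1, h2] at h; exact h
    have hsub : (r+m-1) - (r+i-1) = m - i := by omega
    have hpow : p^(r+i+2) = p^(r+i-1) * p^3 := by
      rw [← pow_add]; congr 1; omega
    unfold binomProb
    rw [hsub, hpow]
    have hcast : ((r+m-1).choose (r+i-1) : ℝ) * ((r+i-1).choose (r-1) : ℝ)
        = ((r+m-1).choose (r-1) : ℝ) * (m.choose i : ℝ) := by exact_mod_cast congrArg Nat.cast hch
    field_simp
    linear_combination ((p - x) ^ i * (1 - p) ^ (m - i) * W) * hcast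
  rw [Finset.sum_congr rfl key, ← Finset.mul_sum]
  have hb := add_pow (p - x) (1 - p) m
  have : (p - x) + (1 - p) = 1 - x := by ring
  rw [this] at hb
  rw [← hb]; ring

/-- Identity (5.56) of the paper. -/
theorem sigma_rW_general (w : ℕ → ℝ)
    (hw0 : ∀ l, 0 ≤ w l) (hw1 : ∑' l, w l = 1)
    (hmom : ∀ A : ℝ, 1 < A → Summable fun l : ℕ => w l * A ^ l)
    (r : ℕ) (hr : 1 ≤ r) (x : ℝ) (hx : x ∈ Set.Ioc (0:ℝ) 1) :
    2 * ∑' i : ℕ, ((r + i - 1).choose (r - 1) : ℝ) *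
        ∫ p in x..1, (p - x) ^ i * thinTailDeriv w (r + i) p / p ^ (r + i + 2)
      = (r : ℝ) * (1 / x ^ 2 - 1) *
        ∑' i : ℕ, w (r + i) * ((r + i).choose r : ℝ) * (1 - x) ^ i := by
  obtain ⟨hx0, hx1⟩ := hx
  have hxne : x ≠ 0 := ne_of_gt hx0
  -- summability of dominating series
  have hsumDom : ∀ s : ℕ, Summable (fun l : ℕ => w l * l * ((l-1).choose s : ℝ)) := by
    intro s
    apply Summable.of_nonneg_of_le
      (fun l => mul_nonneg (mul_nonneg (hw0 l) (Nat.cast_nonneg _)) (Nat.cast_nonneg _)) _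
      (hmom 4 (by norm_num))
    intro l
    have h1 : (l:ℝ) ≤ 2^l := by exact_mod_cast (Nat.lt_two_pow_self (n := l)).le
    have h2 : ((l-1).choose s : ℝ) ≤ 2^l := by
      have h4 := chooseLeTwoPow (l-1) s
      have h3 : (2:ℕ)^(l-1) ≤ 2^l := Nat.pow_le_pow_right (by norm_num) (by omega)
      exact_mod_cast le_trans h4 h3
    calc w l * l * ((l-1).choose s : ℝ) ≤ w l * 2^l * 2^l := by
          apply mul_le_mul (mul_le_mul_of_nonneg_left h1 (hw0 l)) h2 (Nat.cast_nonneg _)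
            (mul_nonneg (hw0 l) (by positivity))
      _ = w l * 4^l := by rw [mul_assoc, ← mul_pow]; norm_num
  set g : ℕ → ℕ → ℝ → ℝ := fun l i p =>
    (p - x)^i * (w l * l * binomProb (l-1) (r+i-1) p) / p^(r+i+2) with hgdef
  have hgm : ∀ l i, Measurable (g l i) := by
    intro l i; simp only [hgdef]; unfold binomProb; fun_prop
  have hgnn : ∀ l i, ∀ p ∈ Set.Icc x 1, 0 ≤ g l i p := by
    intro l i p hp
    have h1 : 0 ≤ p - x := by linarith [hp.1]
    have h2 : 0 ≤ 1 - p := by linarith [hp.2]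
    have h3 : 0 ≤ p := le_trans hx0.le hp.1
    simp only [hgdef]; unfold binomProb
    apply div_nonneg _ (pow_nonneg h3 _)
    apply mul_nonneg (pow_nonneg h1 _)
    apply mul_nonneg (mul_nonneg (hw0 l) (Nat.cast_nonneg _))
    exact mul_nonneg (mul_nonneg (Nat.cast_nonneg _) (pow_nonneg h3 _)) (pow_nonneg h2 _)
  have hgint : ∀ l i, IntervalIntegrable (g l i) volume x 1 := by
    intro l i
    apply ContinuousOn.intervalIntegrable
    apply ContinuousOn.div
    · apply Continuous.continuousOn
      unfold binomProb; fun_prop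
    · fun_prop
    · intro p hp
      rw [Set.uIcc_of_le hx1] at hp
      exact pow_ne_zero _ (ne_of_gt (lt_of_lt_of_le hx0 hp.1))
  set b : ℕ → ℕ → ℝ := fun l i => ∫ p in x..1, g l i p with hbdef
  have hbnn : ∀ l i, 0 ≤ b l i :=
    fun l i => intervalIntegral.integral_nonneg hx1 (fun p hp => hgnn l i p hp)
  -- vanishing of g for l < r + i
  have hgzero : ∀ l i, l < r + i → ∀ p, g l i p = 0 := by
    intro l i hli p
    rcases Nat.eq_zero_or_pos l with rfl | hl
    · simp [hgdef]
    · have : (l-1).choose (r+i-1) = 0 := Nat.choose_eq_zero_of_lt (by omega)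
      simp [hgdef, binomProb, this]
  have hbzero : ∀ l i, l < r + i → b l i = 0 := by
    intro l i hli
    simp only [hbdef]
    rw [intervalIntegral.integral_congr (g := fun _ => (0:ℝ))
      (fun p _ => hgzero l i hli p)]
    simp
  -- Step A: exchange integral and tsum
  have stepA : ∀ i : ℕ, (∫ p in x..1, (p - x)^i * thinTailDeriv w (r+i) p / p^(r+i+2))
      = ∑' l, b l i := by
    intro i
    have hptw : ∀ p : ℝ, (p - x)^i * thinTailDeriv w (r+i) p / p^(r+i+2) = ∑' l, g l i p := by
      intro p
      rw [thinTailDeriv, ← tsum_mul_left, ← tsum_div_const]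
    -- dominating constant
    set D : ℕ → ℝ := fun l => w l * l * ((l-1).choose (r+i-1) : ℝ) / x^3 with hDdef
    have hDnn : ∀ l, 0 ≤ D l := fun l => by
      simp only [hDdef]
      exact div_nonneg (mul_nonneg (mul_nonneg (hw0 l) (Nat.cast_nonneg _)) (Nat.cast_nonneg _))
        (by positivity)
    have hDsum : Summable D := by
      simp only [hDdef, div_eq_mul_inv]
      exact (hsumDom (r+i-1)).mul_right _
    have hgD : ∀ l, ∀ p ∈ Set.Ioc x 1, g l i p ≤ D l := by
      intro l p hp
      have hp0 : 0 < p := lt_trans hx0 hp.1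
      have hpx : 0 ≤ p - x := by linarith [hp.1]
      have hp1 : p ≤ 1 := hp.2
      have hpne : p ≠ 0 := ne_of_gt hp0
      have hpow : p^(r+i+2) = p^(r+i-1) * p^3 := by
        rw [← pow_add]; congr 1; omega
      have he : g l i p = (w l * l * ((l-1).choose (r+i-1) : ℝ)) *
          ((p-x)^i * (1-p)^(l-1-(r+i-1))) * (1/p^3) := by
        simp only [hgdef]; unfold binomProb
        rw [hpow]; field_simp
      rw [he]
      have hA : (p-x)^i ≤ 1 := pow_le_one₀ hpx (by linarith)
      have hB : (1-p)^(l-1-(r+i-1)) ≤ 1 := pow_le_one₀ (by linarith) (by linarith)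
      have hC : 1/p^3 ≤ 1/x^3 := by
        apply one_div_le_one_div_of_le (by positivity)
        exact pow_le_pow_left₀ hx0.le hp.1.le 3
      calc (w l * l * ((l-1).choose (r+i-1) : ℝ)) * ((p-x)^i * (1-p)^(l-1-(r+i-1))) * (1/p^3)
          ≤ (w l * l * ((l-1).choose (r+i-1) : ℝ)) * (1 * 1) * (1/x^3) := by
            have hXnn : 0 ≤ w l * l * ((l-1).choose (r+i-1) : ℝ) :=
              mul_nonneg (mul_nonneg (hw0 l) (Nat.cast_nonneg _)) (Nat.cast_nonneg _)
            apply mul_le_mul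
            · apply mul_le_mul_of_nonneg_left _ hXnn
              exact le_trans (mul_le_one₀ hA (pow_nonneg (by linarith) _) hB) (by norm_num)
            · exact hC
            · exact (one_div_pos.mpr (pow_pos hp0 3)).le
            · exact mul_nonneg hXnn (by norm_num)
        _ = D l := by simp only [hDdef]; field_simp
    rw [intervalIntegral.integral_of_le hx1]
    rw [MeasureTheory.setIntegral_congr_fun measurableSet_Ioc
      (fun p _ => hptw p)]
    rw [MeasureTheory.integral_tsum
      (fun l => (hgm l i).aestronglyMeasurable)]
    · exact tsum_congr fun l => (intervalIntegral.integral_of_le hx1).symm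
    · -- finiteness of the sum of lintegrals
      have hbnd : ∀ l : ℕ, (∫⁻ p, ‖g l i p‖₊ ∂(volume.restrict (Set.Ioc x 1)))
          ≤ ENNReal.ofReal (D l * (1-x)) := by
        intro l
        have : (∫⁻ p, ‖g l i p‖₊ ∂(volume.restrict (Set.Ioc x 1)))
            ≤ ∫⁻ _, ENNReal.ofReal (D l) ∂(volume.restrict (Set.Ioc x 1)) := by
          apply MeasureTheory.lintegral_mono_ae
          rw [MeasureTheory.ae_restrict_iff' measurableSet_Ioc]
          filter_upwards with p hp
          have h1 : 0 ≤ g l i p := hgnn l i p ⟨hp.1.le, hp.2⟩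
          rw [← enorm_eq_nnnorm, Real.enorm_eq_ofReal h1]
          exact ENNReal.ofReal_le_ofReal (hgD l p hp)
        refine le_trans this ?_
        rw [MeasureTheory.lintegral_const, MeasureTheory.Measure.restrict_apply_univ,
          Real.volume_Ioc, ENNReal.ofReal_mul (hDnn l)]
      apply ne_top_of_le_ne_top (ENNReal.ofReal_ne_top (r := ∑' l, D l * (1-x)))
      calc ∑' l, (∫⁻ p, ‖g l i p‖₊ ∂(volume.restrict (Set.Ioc x 1)))
          ≤ ∑' l, ENNReal.ofReal (D l * (1-x)) := ENNReal.tsum_le_tsum hbnd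
        _ = ENNReal.ofReal (∑' l, D l * (1-x)) := by
            rw [ENNReal.ofReal_tsum_of_nonneg
              (fun l => mul_nonneg (hDnn l) (by linarith)) (hDsum.mul_right _)]
  -- the double-indexed family
  set a : ℕ × ℕ → ℝ := fun q => ((r+q.2-1).choose (r-1):ℝ) * b q.1 q.2 with hadef
  have hann : ∀ q, 0 ≤ a q := fun q => mul_nonneg (Nat.cast_nonneg _) (hbnn q.1 q.2)
  set c0 : ℝ := (1/x^2 - 1)/2 with hc0def
  set v : ℕ → ℝ := fun l => w l * l * ((l-1).choose (r-1):ℝ) * (1-x)^(l-r) * c0 with hvdef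
  have hc0nn : 0 ≤ c0 := by
    have h2 : x^2 ≤ 1 := by nlinarith
    have : 1 ≤ 1/x^2 := by
      rw [le_div_iff₀ (by positivity)]; linarith
    simp only [hc0def]; linarith
  -- row sums
  have hrow : ∀ l, ∑' i, a (l, i) = v l := by
    intro l
    rcases lt_or_ge l r with hl | hl
    · have hz : ∀ i, a (l, i) = 0 := by
        intro i
        simp only [hadef]
        rw [hbzero l i (by omega)]; ring
      rw [tsum_congr hz, tsum_zero]
      symm
      rcases Nat.eq_zero_or_pos l with rfl | hl0
      · simp [hvdef]
      · have : (l-1).choose (r-1) = 0 := Nat.choose_eq_zero_of_lt (by omega)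
        simp [hvdef, this]
    · obtain ⟨m, rfl⟩ : ∃ m, l = r + m := ⟨l - r, by omega⟩
      rw [tsum_eq_sum (s := Finset.range (m+1))
        (by
          intro i hi
          have : r + m < r + i := by
            have := Finset.mem_range.not.mp hi; omega
          simp only [hadef]
          rw [hbzero _ _ this]; ring)]
      have hterm : ∀ i ∈ Finset.range (m+1), a (r+m, i)
          = ((r+i-1).choose (r-1):ℝ) * ∫ p in x..1, g (r+m) i p := by
        intro i _; simp only [hadef, hbdef]
      rw [Finset.sum_congr rfl hterm]
      have hint : ∀ i ∈ Finset.range (m+1),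
          IntervalIntegrable (fun p => ((r+i-1).choose (r-1):ℝ) * g (r+m) i p) volume x 1 :=
        fun i _ => (hgint (r+m) i).const_mul _
      rw [show ∑ i ∈ Finset.range (m+1), ((r+i-1).choose (r-1):ℝ) * ∫ p in x..1, g (r+m) i p
          = ∑ i ∈ Finset.range (m+1), ∫ p in x..1, ((r+i-1).choose (r-1):ℝ) * g (r+m) i p by
        refine Finset.sum_congr rfl fun i _ => ?_
        rw [intervalIntegral.integral_const_mul]]
      rw [← intervalIntegral.integral_finset_sum hint]
      have hEq : Set.EqOn
          (fun p => ∑ i ∈ Finset.range (m+1), ((r+i-1).choose (r-1):ℝ) * g (r+m) i p)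
          (fun p => (w (r+m) * (r+m:ℕ) * ((r+m-1).choose (r-1):ℝ) * (1-x)^m) * (1/p^3))
          (Set.uIcc x 1) := by
        intro p hp
        rw [Set.uIcc_of_le hx1] at hp
        have hpne : p ≠ 0 := ne_of_gt (lt_of_lt_of_le hx0 hp.1)
        have hps := pointwiseSum (w (r+m) * ((r+m:ℕ):ℝ)) r m hr x p hpne
        show ∑ i ∈ Finset.range (m+1), ((r+i-1).choose (r-1):ℝ) * g (r+m) i p
            = (w (r+m) * ((r+m:ℕ):ℝ) * ((r+m-1).choose (r-1):ℝ) * (1-x)^m) * (1/p^3)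
        simp only [hgdef]
        rw [hps]
      rw [intervalIntegral.integral_congr hEq]
      rw [intervalIntegral.integral_const_mul, intP3 x hx0 hx1]
      simp only [hvdef, hc0def, Nat.add_sub_cancel_left]
      try push_cast
      try ring
  -- summability of v
  have hvnn : ∀ l, 0 ≤ v l := by
    intro l
    simp only [hvdef]
    apply mul_nonneg _ hc0nn
    apply mul_nonneg _ (pow_nonneg (by linarith) _)
    exact mul_nonneg (mul_nonneg (hw0 l) (Nat.cast_nonneg _)) (Nat.cast_nonneg _)
  have hvsum : Summable v := by
    apply Summable.of_nonneg_of_le hvnn _ ((hsumDom (r-1)).mul_right c0)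
    intro l
    simp only [hvdef]
    have h1 : (1-x)^(l-r) ≤ 1 := pow_le_one₀ (by linarith) (by linarith)
    have h2 : (0:ℝ) ≤ w l * l * ((l-1).choose (r-1):ℝ) :=
      mul_nonneg (mul_nonneg (hw0 l) (Nat.cast_nonneg _)) (Nat.cast_nonneg _)
    calc w l * l * ((l-1).choose (r-1):ℝ) * (1-x)^(l-r) * c0
        ≤ w l * l * ((l-1).choose (r-1):ℝ) * 1 * c0 := by
          apply mul_le_mul_of_nonneg_right _ hc0nn
          exact mul_le_mul_of_nonneg_left h1 h2
      _ = w l * l * ((l-1).choose (r-1):ℝ) * c0 := by ring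
  -- product summability
  have haprod : Summable a := by
    rw [summable_prod_of_nonneg hann]
    constructor
    · intro l
      apply summable_of_ne_finset_zero (s := Finset.range (l+1))
      intro i hi
      have : l < r + i := by
        have := Finset.mem_range.not.mp hi; omega
      simp only [hadef]
      rw [hbzero l i this]; ring
    · apply Summable.congr hvsum
      intro l
      exact (hrow l).symm
  -- put everything together
  have key : (∑' i : ℕ, ((r + i - 1).choose (r - 1) : ℝ) *
        ∫ p in x..1, (p - x) ^ i * thinTailDeriv w (r + i) p / p ^ (r + i + 2))
      = ∑' l, v l := by
    have h1 : ∀ i : ℕ, ((r + i - 1).choose (r - 1) : ℝ) *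
        (∫ p in x..1, (p - x) ^ i * thinTailDeriv w (r + i) p / p ^ (r + i + 2))
        = ∑' l, a (l, i) := by
      intro i
      rw [stepA i, ← tsum_mul_left]
    rw [tsum_congr h1]
    have hcomm : ∑' (i : ℕ) (l : ℕ), (fun l i => a (l, i)) l i
        = ∑' (l : ℕ) (i : ℕ), (fun l i => a (l, i)) l i :=
      Summable.tsum_comm (by exact haprod)
    rw [hcomm]
    exact tsum_congr hrow
  rw [key]
  -- shift the sum
  have hshift : ∑' l, v l = ∑' m : ℕ, v (m + r) := by
    rw [← Summable.sum_add_tsum_nat_add r hvsum]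
    have hz : ∑ l ∈ Finset.range r, v l = 0 := by
      apply Finset.sum_eq_zero
      intro l hl
      have hlr : l < r := Finset.mem_range.mp hl
      rcases Nat.eq_zero_or_pos l with rfl | hl0
      · simp [hvdef]
      · have : (l-1).choose (r-1) = 0 := Nat.choose_eq_zero_of_lt (by omega)
        simp [hvdef, this]
    rw [hz, zero_add]
  rw [hshift]
  rw [← tsum_mul_left, ← tsum_mul_left]
  apply tsum_congr
  intro m
  have hch : ((r+m) * (r+m-1).choose (r-1) : ℕ) = (r * (r+m).choose r : ℕ) := by
    have h := Nat.add_one_mul_choose_eq (r+m-1) (r-1)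
    have e1 : r+m-1+1 = r+m := by omega
    have e2 : r-1+1 = r := by omega
    rw [e1, e2] at h
    rw [h]; ring
  have hchR : ((r+m:ℕ):ℝ) * ((r+m-1).choose (r-1):ℝ) = (r:ℝ) * ((r+m).choose r:ℝ) := by
    exact_mod_cast congrArg Nat.cast hch
  have hmr : m + r = r + m := Nat.add_comm m r
  simp only [hvdef, hmr, hc0def]
  have hsub : (r+m) - r = m := by omega
  rw [hsub]
  push_cast at hchR ⊢
  linear_combination (w (r+m) * (1-x)^m * (1/x^2 - 1)) * hchR
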